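/- Let R be a finite commutative chain ring with residue field F_q, S a Galois extension of R of degree m with residue field F_{q^m}, and Ψ : S → F_{q^m} the natural projection. A subset {b_1,…,b_t} of S is R-linearly independent if and only if {Ψ(b_1),…,Ψ(b_t)} is F_q-linearly independent. -/

import Mathlib

open IsLocalRing

/-- The rank of a submodule `N`: the smallest number of elements generating `N`. -/
noncomputable def subrank {R M : Type*} [Semiring R] [AddCommMonoid M] [Module R M]
    (N : Submodule R M) : ℕ :=
  sInf {k | ∃ f : Fin k → M, Submodule.span R (Set.range f) = N}

/-- The rank of a vector `u ∈ S^n` over `R`: the smallest number of generators of the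
`R`-submodule of `S` generated by the coordinates of `u` (i.e. of the support of `u`). -/
noncomputable def vecrank (R : Type*) {S : Type*} {n : ℕ} [Semiring R] [AddCommMonoid S]
    [Module R S] (u : Fin n → S) : ℕ :=
  subrank (Submodule.span R (Set.range u))

/-- The minimum rank distance of a linear code `C ⊆ S^n`, ranks being taken over `K`. -/
noncomputable def minrkdist (K : Type*) {S : Type*} {n : ℕ} [Semiring K] [Ring S]
    [Module K S] (C : Submodule S (Fin n → S)) : ℕ :=
  sInf {d | ∃ u ∈ C, ∃ v ∈ C, u ≠ v ∧ vecrank K (u - v) = d}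

attribute [-instance] IsLocalRing.ResidueField.instAlgebra

/-- Let `R` be a finite commutative chain ring with residue field `F_q`,
`S` a Galois extension of `R` of degree `m` with residue field `F_{q^m}`, and
`Ψ : S → F_{q^m}` the natural projection.  A family `b₁, …, b_t` of elements of `S` is
`R`-linearly independent iff `Ψ(b₁), …, Ψ(b_t)` is `F_q`-linearly independent
(`F_{q^m}` being an `F_q`-vector space via the induced map of residue fields). -/
theorem linearIndependent_iff_linearIndependent_residue
    (R S : Type*) [CommRing R] [Finite R] [IsLocalRing R] [IsPrincipalIdealRing R]
    [CommRing S] [Finite S] [IsLocalRing S] [IsPrincipalIdealRing S]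
    [Algebra R S] [IsLocalHom (algebraMap R S)] [Module.Free R S]
    (m : ℕ) (hm : Module.finrank R S = m)
    (hGal : maximalIdeal S = Ideal.map (algebraMap R S) (maximalIdeal R))
    (t : ℕ) (b : Fin t → S) :
    letI : Module (ResidueField R) (ResidueField S) :=
      (ResidueField.map (algebraMap R S)).toAlgebra.toModule
    (LinearIndependent R b ↔
      LinearIndependent (ResidueField R) (fun i => residue S (b i))) := by
  classical
  letI : Module (ResidueField R) (ResidueField S) :=
      (ResidueField.map (algebraMap R S)).toAlgebra.toModule
  obtain ⟨θ, hθ⟩ := (IsPrincipalIdealRing.principal (maximalIdeal R)).principal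
  have hnil : IsNilpotent (maximalIdeal R) := by
    rw [← IsLocalRing.jacobson_eq_maximalIdeal ⊥ bot_ne_top]
    exact IsArtinianRing.isNilpotent_jacobson_bot
  obtain ⟨e, he⟩ := hnil
  have hθm : θ ∈ maximalIdeal R := hθ ▸ Ideal.subset_span rfl
  have hθe : θ ^ e = 0 := by
    have := Ideal.pow_mem_pow hθm e
    rw [he] at this
    exact this
  have hsmul : ∀ (r : R) (x : ResidueField S),
      (residue R r) • x = residue S (algebraMap R S r) * x := by
    intro r x
    show ResidueField.map (algebraMap R S) (residue R r) * x = _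
    rw [ResidueField.map_residue]
  have hres : ∀ (r : Fin t → R),
      residue S (∑ i, r i • b i) = ∑ i, (residue R (r i)) • residue S (b i) := by
    intro r
    rw [map_sum]
    refine Finset.sum_congr rfl fun i _ => ?_
    rw [hsmul, Algebra.smul_def, map_mul]
  have hMθ : maximalIdeal S = Ideal.span {algebraMap R S θ} := by
    rw [hGal, hθ]
    exact (Ideal.map_span (algebraMap R S) {θ}).trans (by rw [Set.image_singleton])
  constructor
  · -- forward
    intro hli
    rw [Fintype.linearIndependent_iff] at hli ⊢
    intro c hc
    choose r hr using fun i => IsLocalRing.residue_surjective (R := R) (c i)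
    -- minimal n with θ^n = 0
    have hex : ∃ n, θ ^ n = 0 := ⟨e, hθe⟩
    set n := Nat.find hex with hn
    have hn0 : n ≠ 0 := by
      intro h
      have := Nat.find_spec hex
      rw [← hn, h, pow_zero] at this
      exact one_ne_zero this
    have hnsub : θ ^ (n - 1) ≠ 0 := Nat.find_min hex (Nat.sub_lt (Nat.pos_of_ne_zero hn0) one_pos)
    have hnspec : θ ^ n = 0 := Nat.find_spec hex
    have hmem : (∑ i, r i • b i) ∈ maximalIdeal S := by
      rw [← Ideal.Quotient.eq_zero_iff_mem]
      show residue S _ = 0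
      rw [hres]
      simp only [hr]
      exact hc
    rw [hMθ, Ideal.mem_span_singleton'] at hmem
    obtain ⟨s, hs⟩ := hmem
    have hzero : ∑ i, (θ ^ (n - 1) * r i) • b i = 0 := by
      have : θ ^ (n - 1) • (∑ i, r i • b i) = 0 := by
        rw [← hs, Algebra.smul_def, mul_comm s, ← mul_assoc, ← map_mul, ← pow_succ,
          Nat.sub_add_cancel (Nat.pos_of_ne_zero hn0), hnspec, map_zero, zero_mul]
      rw [Finset.smul_sum] at this
      simpa only [smul_smul] using this
    have hann := hli _ hzero
    intro i
    have hri : r i ∈ maximalIdeal R := by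
      by_contra hr'
      have hu : IsUnit (r i) := by
        rwa [mem_maximalIdeal, mem_nonunits_iff, not_not] at hr'
      exact hnsub ((hu.mul_left_eq_zero).1 (hann i))
    rw [← hr i]
    exact Ideal.Quotient.eq_zero_iff_mem.2 hri
  · -- backward
    intro hli
    rw [Fintype.linearIndependent_iff] at hli ⊢
    intro x hx
    by_contra hne
    push_neg at hne
    obtain ⟨i₁, hi₁⟩ := hne
    -- find maximal k with all coords in m^k
    have hex : ∃ k, ¬ ∀ i, x i ∈ (maximalIdeal R) ^ (k + 1) := by
      refine ⟨e, fun h => hi₁ ?_⟩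
      have := Ideal.pow_le_pow_right (Nat.le_succ e) (h i₁)
      rw [he] at this
      simpa using this
    set k := Nat.find hex with hk
    have hk1 : ¬ ∀ i, x i ∈ (maximalIdeal R) ^ (k + 1) := Nat.find_spec hex
    have hk0 : ∀ i, x i ∈ (maximalIdeal R) ^ k := by
      cases' hk' : k with j
      · simp [pow_zero]
      · have := Nat.find_min hex (m := j) (by omega)
        rw [not_not] at this
        exact this
    push_neg at hk1
    obtain ⟨i₀, hi₀⟩ := hk1
    have hkspan : (maximalIdeal R) ^ k = Ideal.span {θ ^ k} := by
      rw [hθ]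
      exact Ideal.span_singleton_pow θ k
    choose y hy using fun i => (Ideal.mem_span_singleton'.1 (hkspan ▸ hk0 i))
    have hyu : IsUnit (y i₀) := by
      by_contra hy'
      refine hi₀ ?_
      rw [← hy i₀, pow_succ']
      exact Ideal.mul_mem_mul (mem_maximalIdeal _ |>.2 hy')
        (hkspan ▸ Ideal.mem_span_singleton_self (θ ^ k))
    -- θ^k • z = 0 where z = ∑ y i • b i
    set z := ∑ i, y i • b i with hz
    have hzk : (θ ^ k) • z = 0 := by
      rw [hz, Finset.smul_sum]
      rw [← hx]
      refine Finset.sum_congr rfl fun i _ => ?_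
      rw [smul_smul, mul_comm, hy]
    -- coordinates of z all in maximal ideal
    let B := Module.Free.chooseBasis R S
    have hθk : θ ^ k ≠ 0 := by
      intro h
      refine hi₀ ?_
      rw [← hy i₀, h, mul_zero]
      exact Submodule.zero_mem _
    have hcoord : ∀ j, B.repr z j ∈ maximalIdeal R := by
      intro j
      by_contra hcj
      have hu : IsUnit (B.repr z j) := by
        rwa [mem_maximalIdeal, mem_nonunits_iff, not_not] at hcj
      refine hθk ?_
      have : B.repr ((θ ^ k) • z) j = 0 := by rw [hzk]; simp
      rw [map_smul] at this
      simp only [Finsupp.smul_apply, smul_eq_mul] at this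
      exact (hu.mul_left_eq_zero).1 this
    have hzmem : z ∈ maximalIdeal S := by
      have h2 : ∑ j, B.repr z j • B j ∈ maximalIdeal S := by
        rw [hGal]
        refine Ideal.sum_mem _ fun j _ => ?_
        rw [Algebra.smul_def]
        exact Ideal.mul_mem_right _ _ (Ideal.mem_map_of_mem _ (hcoord j))
      rwa [B.sum_repr z] at h2
    have hzres : residue S z = 0 := Ideal.Quotient.eq_zero_iff_mem.2 hzmem
    rw [hz, hres] at hzres
    have := hli _ hzres i₀
    have : y i₀ ∈ maximalIdeal R := Ideal.Quotient.eq_zero_iff_mem.1 this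
    exact (mem_nonunits_iff.1 (mem_maximalIdeal _ |>.1 this)) hyu
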